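/- arXiv:1912.09089 — 4 statements merged into one kernel-verified Lean document; each statement's English description precedes it below -/
import Mathlib

section
/- Let f be an (n(q-1) - mq)-eigenfunction of the Hamming graph H(n,q) for some m with 1 ≤ m ≤ n. Then for any pairwise distinct coordinate positions i_1, …, i_{m-1} in {1,…,n} and any alphabet symbols a_1, …, a_{m-1}, the function f either has at least two nonzero values on the face Γ_{i_1…i_{m-1}}^{a_1…a_{m-1}} or all values of f on this face are zero. -/
open scoped BigOperators

/-- The ball of radius 1 centered at `x` in a graph `G`. -/
def ball1 {V : Type*} (G : SimpleGraph V) (x : V) : Set V := {y | y = x ∨ G.Adj x y}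

/-- A perfect one-error-correcting code: the balls of radius 1 centered at the
vertices of `C` partition the vertex set. -/
def IsPerfectCode {V : Type*} (G : SimpleGraph V) (C : Set V) : Prop :=
  ∀ x : V, ∃! c, c ∈ C ∧ c ∈ ball1 G x

/-- A perfect bitrade: a pair of disjoint nonempty vertex sets such that every ball of
radius 1 contains exactly one vertex of each, or none of either. -/
def IsPerfectBitrade {V : Type*} (G : SimpleGraph V) (T0 T1 : Set V) : Prop :=
  Disjoint T0 T1 ∧ T0.Nonempty ∧ T1.Nonempty ∧
    ∀ x : V,
      ((∃! y, y ∈ T0 ∧ y ∈ ball1 G x) ∧ (∃! y, y ∈ T1 ∧ y ∈ ball1 G x)) ∨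
        (∀ y, y ∈ T0 ∪ T1 → y ∉ ball1 G x)

/-- A spherical bitrade: a pair of disjoint nonempty vertex sets such that every sphere of
radius 1 contains exactly one vertex of each, or none of either. -/
def IsSphericalBitrade {V : Type*} (G : SimpleGraph V) (S0 S1 : Set V) : Prop :=
  Disjoint S0 S1 ∧ S0.Nonempty ∧ S1.Nonempty ∧
    ∀ x : V,
      ((∃! y, y ∈ S0 ∧ G.Adj x y) ∧ (∃! y, y ∈ S1 ∧ G.Adj x y)) ∨
        (∀ y, y ∈ S0 ∪ S1 → ¬ G.Adj x y)

/-- The Hamming graph `H(n,q)`: vertices are `n`-tuples over an alphabet of size `q`,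
adjacent iff they differ in exactly one coordinate. -/
def hammingGraph (n q : ℕ) : SimpleGraph (Fin n → Fin q) where
  Adj x y := hammingDist x y = 1
  symm := by constructor; intro x y h; rwa [hammingDist_comm]
  loopless := by constructor; intro x h; simp [hammingDist_self] at h

/-- `f` is a `μ`-eigenfunction of `G`: `f` is not identically zero and
`μ · f x = ∑_{y ∈ O(x)} f y` for every vertex `x`. -/
def IsEigenfun {V : Type*} (G : SimpleGraph V) (μ : ℝ) (f : V → ℝ) : Prop :=
  f ≠ 0 ∧ ∀ x : V, μ * f x = ∑ᶠ y ∈ G.neighborSet x, f y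

/-- The characteristic function of a set of vertices. -/
noncomputable def chi {V : Type*} (C : Set V) : V → ℝ := Set.indicator C 1

/-- The code `C` has minimum (graph) distance exactly `d`. -/
def HasMinDist {V : Type*} (G : SimpleGraph V) (C : Set V) (d : ℕ) : Prop :=
  (∀ x ∈ C, ∀ y ∈ C, x ≠ y → (d : ℕ∞) ≤ G.edist x y) ∧
    ∃ x ∈ C, ∃ y ∈ C, x ≠ y ∧ G.edist x y = d

/-- The code `C` of `n`-tuples has minimum Hamming distance exactly `d`. -/
def HasMinHDist {n q : ℕ} (C : Set (Fin n → Fin q)) (d : ℕ) : Prop :=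
  (∀ x ∈ C, ∀ y ∈ C, x ≠ y → d ≤ hammingDist x y) ∧
    ∃ x ∈ C, ∃ y ∈ C, x ≠ y ∧ hammingDist x y = d

/-- `G` is distance-regular with intersection numbers `p i j k`. -/
def IsDistRegular {V : Type*} (G : SimpleGraph V) (p : ℕ → ℕ → ℕ → ℕ) : Prop :=
  G.Connected ∧ ∀ (i j k : ℕ) (x y : V), G.edist x y = k →
    {z : V | G.edist x z = i ∧ G.edist z y = j}.ncard = p i j k

section AuxHelpers

variable {n q : ℕ}

private lemma aux_ham_update (x : Fin n → Fin q) (j : Fin n) (c : Fin q) (h : c ≠ x j) :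
    hammingDist x (Function.update x j c) = 1 := by
  unfold hammingDist
  rw [Finset.card_eq_one]
  refine ⟨j, ?_⟩
  ext k
  simp only [Finset.mem_filter, Finset.mem_univ, true_and, Finset.mem_singleton]
  constructor
  · intro hk
    by_contra hkj
    exact hk (by rw [Function.update_of_ne hkj])
  · rintro rfl
    rw [Function.update_self]
    exact fun hh => h hh.symm

private lemma aux_exists_diff (x y : Fin n → Fin q) (h : hammingDist x y = 1) :
    ∃ j, x j ≠ y j ∧ ∀ k, k ≠ j → x k = y k := by
  unfold hammingDist at h
  rw [Finset.card_eq_one] at h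
  obtain ⟨j, hj⟩ := h
  have hjm : j ∈ ({j} : Finset (Fin n)) := Finset.mem_singleton_self j
  rw [← hj] at hjm
  simp only [Finset.mem_filter, Finset.mem_univ, true_and] at hjm
  refine ⟨j, hjm, fun k hk => ?_⟩
  by_contra hne
  have hkmem : k ∈ ({j} : Finset (Fin n)) := by
    rw [← hj]
    simp [hne]
  exact hk (Finset.mem_singleton.mp hkmem)

private noncomputable def auxDiffIdx (hn : 0 < n) (x y : Fin n → Fin q) : Fin n :=
  if h : ∃ j, x j ≠ y j ∧ ∀ k, k ≠ j → x k = y k then h.choose else ⟨0, hn⟩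

private lemma auxDiffIdx_spec (hn : 0 < n) (x y : Fin n → Fin q)
    (h : hammingDist x y = 1) :
    x (auxDiffIdx hn x y) ≠ y (auxDiffIdx hn x y) ∧
      ∀ k, k ≠ auxDiffIdx hn x y → x k = y k := by
  unfold auxDiffIdx
  rw [dif_pos (aux_exists_diff x y h)]
  exact (aux_exists_diff x y h).choose_spec

private lemma auxDiffIdx_update (hn : 0 < n) (x : Fin n → Fin q) (j : Fin n) (c : Fin q)
    (h : c ≠ x j) : auxDiffIdx hn x (Function.update x j c) = j := by
  have hd := auxDiffIdx_spec hn x _ (aux_ham_update x j c h)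
  by_contra hne
  exact hd.1 (by rw [Function.update_of_ne hne])

private lemma aux_nbr_sum (hn : 0 < n) (g : (Fin n → Fin q) → ℝ) (x : Fin n → Fin q) :
    ∑ j : Fin n, ∑ c : Fin q, g (Function.update x j c)
      = (∑ y ∈ Finset.univ.filter (fun y => hammingDist x y = 1), g y) + n * g x := by
  have step1 : ∀ j : Fin n, ∑ c : Fin q, g (Function.update x j c)
      = (∑ c ∈ Finset.univ.erase (x j), g (Function.update x j c)) + g x := by
    intro j
    rw [← Finset.sum_erase_add Finset.univ _ (Finset.mem_univ (x j)),
      Function.update_eq_self]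
  rw [Finset.sum_congr rfl (fun j _ => step1 j), Finset.sum_add_distrib, Finset.sum_const,
      Finset.card_univ, Fintype.card_fin, nsmul_eq_mul]
  congr 1
  rw [Finset.sum_sigma']
  refine Finset.sum_bij' (fun p _ => Function.update x p.1 p.2)
      (fun y _ => ⟨auxDiffIdx hn x y, y (auxDiffIdx hn x y)⟩) ?_ ?_ ?_ ?_ ?_
  · rintro ⟨j, c⟩ hp
    have hc : c ≠ x j := Finset.ne_of_mem_erase (Finset.mem_sigma.mp hp).2
    exact Finset.mem_filter.mpr ⟨Finset.mem_univ _, aux_ham_update x j c hc⟩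
  · intro y hy
    have hdist : hammingDist x y = 1 := (Finset.mem_filter.mp hy).2
    have hspec := auxDiffIdx_spec hn x y hdist
    exact Finset.mem_sigma.mpr ⟨Finset.mem_univ _,
      Finset.mem_erase.mpr ⟨fun hh => hspec.1 hh.symm, Finset.mem_univ _⟩⟩
  · rintro ⟨j, c⟩ hp
    have hc : c ≠ x j := Finset.ne_of_mem_erase (Finset.mem_sigma.mp hp).2
    have hd := auxDiffIdx_update hn x j c hc
    dsimp only
    rw [hd]
    simp
  · intro y hy
    have hdist : hammingDist x y = 1 := (Finset.mem_filter.mp hy).2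
    have hspec := auxDiffIdx_spec hn x y hdist
    dsimp only
    funext k
    rcases eq_or_ne k (auxDiffIdx hn x y) with rfl | hk
    · rw [Function.update_self]
    · rw [Function.update_of_ne hk]
      exact hspec.2 k hk
  · intro p hp
    rfl

private lemma aux_sum_update {t : ℕ} (φ : (Fin t → Fin q) → ℝ) (l : Fin t) :
    ∑ b : Fin t → Fin q, ∑ c : Fin q, φ (Function.update b l c) = q * ∑ z, φ z := by
  have hinv : Function.Involutive
      (fun p : (Fin t → Fin q) × Fin q => (Function.update p.1 l p.2, p.1 l)) := by
    rintro ⟨b, c⟩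
    simp [Function.update_idem]
  calc ∑ b : Fin t → Fin q, ∑ c : Fin q, φ (Function.update b l c)
      = ∑ p : (Fin t → Fin q) × Fin q, φ (Function.update p.1 l p.2) :=
        (Fintype.sum_prod_type
          (fun p : (Fin t → Fin q) × Fin q => φ (Function.update p.1 l p.2))).symm
    _ = ∑ p : (Fin t → Fin q) × Fin q, φ p.1 :=
        Equiv.sum_comp (Function.Involutive.toPerm _ hinv)
          (fun p : (Fin t → Fin q) × Fin q => φ p.1)
    _ = ∑ b : Fin t → Fin q, ∑ _c : Fin q, φ b :=
        Fintype.sum_prod_type (fun p : (Fin t → Fin q) × Fin q => φ p.1)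
    _ = q * ∑ z, φ z := by
        simp only [Finset.sum_const, Finset.card_univ, Fintype.card_fin, nsmul_eq_mul]
        rw [Finset.mul_sum]

end AuxHelpers

/-- An `(n(q-1)-mq)`-eigenfunction of `H(n,q)` (with `1 ≤ m ≤ n`) either
vanishes identically on a face with `m-1` fixed positions, or has at least two nonzero
values on it. -/
theorem statement1 (n q m : ℕ) (hm1 : 1 ≤ m) (hmn : m ≤ n)
    (f : (Fin n → Fin q) → ℝ)
    (hf : IsEigenfun (hammingGraph n q) ((n * (q - 1) : ℝ) - m * q) f)
    (i : Fin (m - 1) → Fin n) (hi : Function.Injective i) (a : Fin (m - 1) → Fin q) :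
    (∀ x : Fin n → Fin q, (∀ l, x (i l) = a l) → f x = 0) ∨
      (∃ x y : Fin n → Fin q, x ≠ y ∧ (∀ l, x (i l) = a l) ∧ (∀ l, y (i l) = a l) ∧
        f x ≠ 0 ∧ f y ≠ 0) := by
  classical
  have hn : 0 < n := lt_of_lt_of_le hm1 hmn
  rcases Nat.eq_zero_or_pos q with hq | hq
  · subst hq
    left
    intro x _
    exact (x ⟨0, hn⟩).elim0
  set μ : ℝ := (n * (q - 1) : ℝ) - m * q with hμ
  set face : (Fin (m - 1) → Fin q) → Finset (Fin n → Fin q) :=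
    fun b => Finset.univ.filter fun x => ∀ l, x (i l) = b l with hface
  set F : (Fin (m - 1) → Fin q) → ℝ := fun b => ∑ x ∈ face b, f x with hF
  have hfaceswap : ∀ (b : Fin (m - 1) → Fin q) (x : Fin n → Fin q),
      x ∈ face b ↔ ∀ l, x (i l) = b l := by
    intro b x
    simp [hface]
  -- the per-vertex identity
  have key : ∀ x, ∑ j : Fin n, ∑ c : Fin q, f (Function.update x j c) = (μ + n) * f x := by
    intro x
    have h2 := hf.2 x
    have hset : (hammingGraph n q).neighborSet x
        = ↑(Finset.univ.filter fun y => hammingDist x y = 1) := by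
      ext y
      simp only [SimpleGraph.mem_neighborSet, Finset.coe_filter, Set.mem_setOf_eq,
        Finset.mem_univ, true_and]
      exact Iff.rfl
    rw [hset, finsum_mem_coe_finset] at h2
    rw [aux_nbr_sum hn f x, ← h2]
    ring
  -- sum over a face, moving along a fixed coordinate
  have hfix : ∀ (l : Fin (m - 1)) (c : Fin q) (b : Fin (m - 1) → Fin q),
      ∑ x ∈ face b, f (Function.update x (i l) c) = F (Function.update b l c) := by
    intro l c b
    simp only [hF]
    refine Finset.sum_bij' (fun x _ => Function.update x (i l) c)
      (fun y _ => Function.update y (i l) (b l)) ?_ ?_ ?_ ?_ ?_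
    · intro x hx
      simp only [hfaceswap] at hx ⊢
      intro l'
      rcases eq_or_ne l' l with rfl | hl'
      · simp
      · rw [Function.update_of_ne (fun h => hl' (hi h)), Function.update_of_ne hl']
        exact hx l'
    · intro y hy
      simp only [hfaceswap] at hy ⊢
      intro l'
      rcases eq_or_ne l' l with rfl | hl'
      · simp
      · rw [Function.update_of_ne (fun h => hl' (hi h))]
        have := hy l'
        rwa [Function.update_of_ne hl'] at this
    · intro x hx
      simp only [hfaceswap] at hx
      rw [Function.update_idem, ← hx l, Function.update_eq_self]
    · intro y hy
      simp only [hfaceswap] at hy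
      have h1 := hy l
      rw [Function.update_self] at h1
      rw [Function.update_idem, ← h1, Function.update_eq_self]
    · intro x hx
      rfl
  -- sum over a face, moving along a free coordinate
  have hfree : ∀ j : Fin n, (∀ l, i l ≠ j) → ∀ b,
      ∑ x ∈ face b, ∑ c : Fin q, f (Function.update x j c) = q * F b := by
    intro j hj b
    have hbij : ∑ p ∈ face b ×ˢ (Finset.univ : Finset (Fin q)), f (Function.update p.1 j p.2)
        = ∑ p ∈ face b ×ˢ (Finset.univ : Finset (Fin q)), f p.1 := by
      refine Finset.sum_bij' (fun p _ => (Function.update p.1 j p.2, p.1 j))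
        (fun p _ => (Function.update p.1 j p.2, p.1 j)) ?_ ?_ ?_ ?_ ?_
      · intro p hp
        obtain ⟨hp1, _⟩ := Finset.mem_product.mp hp
        refine Finset.mem_product.mpr ⟨?_, Finset.mem_univ _⟩
        simp only [hfaceswap] at hp1 ⊢
        intro l
        rw [Function.update_of_ne (hj l)]
        exact hp1 l
      · intro p hp
        obtain ⟨hp1, _⟩ := Finset.mem_product.mp hp
        refine Finset.mem_product.mpr ⟨?_, Finset.mem_univ _⟩
        simp only [hfaceswap] at hp1 ⊢
        intro l
        rw [Function.update_of_ne (hj l)]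
        exact hp1 l
      · rintro ⟨x, c⟩ hp
        simp [Function.update_idem]
      · rintro ⟨x, c⟩ hp
        simp [Function.update_idem]
      · intro p hp
        rfl
    calc ∑ x ∈ face b, ∑ c : Fin q, f (Function.update x j c)
        = ∑ p ∈ face b ×ˢ (Finset.univ : Finset (Fin q)), f (Function.update p.1 j p.2) :=
          (Finset.sum_product' (face b) Finset.univ
            (fun x c => f (Function.update x j c))).symm
      _ = ∑ p ∈ face b ×ˢ (Finset.univ : Finset (Fin q)), f p.1 := hbij
      _ = ∑ x ∈ face b, ∑ _c : Fin q, f x :=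
          Finset.sum_product' (face b) Finset.univ (fun x _ => f x)
      _ = q * F b := by
          simp only [Finset.sum_const, Finset.card_univ, Fintype.card_fin, nsmul_eq_mul, hF]
          rw [Finset.mul_sum]
  -- the recurrence for F
  have hrec : ∀ b, ∑ l : Fin (m - 1), ∑ c : Fin q, F (Function.update b l c)
      = -(q : ℝ) * F b := by
    intro b
    have h1 : ∑ x ∈ face b, ∑ j : Fin n, ∑ c : Fin q, f (Function.update x j c)
        = (μ + n) * F b := by
      simp only [hF, Finset.mul_sum]
      exact Finset.sum_congr rfl fun x _ => key x
    rw [Finset.sum_comm] at h1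
    set S : Finset (Fin n) := Finset.image i Finset.univ with hS
    have hsplit : ∑ j : Fin n, ∑ x ∈ face b, ∑ c : Fin q, f (Function.update x j c)
        = (∑ j ∈ S, ∑ x ∈ face b, ∑ c : Fin q, f (Function.update x j c))
          + ∑ j ∈ Sᶜ, ∑ x ∈ face b, ∑ c : Fin q, f (Function.update x j c) :=
      (Finset.sum_add_sum_compl S _).symm
    have hSsum : ∑ j ∈ S, ∑ x ∈ face b, ∑ c : Fin q, f (Function.update x j c)
        = ∑ l : Fin (m - 1), ∑ c : Fin q, F (Function.update b l c) := by
      rw [hS, Finset.sum_image (fun l _ l' _ h => hi h)]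
      refine Finset.sum_congr rfl fun l _ => ?_
      rw [Finset.sum_comm]
      exact Finset.sum_congr rfl fun c _ => hfix l c b
    have hCsum : ∑ j ∈ Sᶜ, ∑ x ∈ face b, ∑ c : Fin q, f (Function.update x j c)
        = ((n - (m - 1) : ℕ) : ℝ) * ((q : ℝ) * F b) := by
      have hall : ∀ j ∈ Sᶜ, ∑ x ∈ face b, ∑ c : Fin q, f (Function.update x j c)
          = (q : ℝ) * F b := by
        intro j hj
        refine hfree j ?_ b
        intro l heq
        rw [Finset.mem_compl, hS] at hj
        exact hj (Finset.mem_image.mpr ⟨l, Finset.mem_univ l, heq⟩)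
      have hc : Sᶜ.card = n - (m - 1) := by
        rw [Finset.card_compl, hS, Finset.card_image_of_injective _ hi]
        simp
      rw [Finset.sum_congr rfl hall, Finset.sum_const, hc, nsmul_eq_mul]
    rw [hsplit, hSsum, hCsum] at h1
    have hm1n : (m - 1 : ℕ) ≤ n := le_trans (Nat.sub_le m 1) hmn
    have hcast1 : ((n - (m - 1) : ℕ) : ℝ) = (n : ℝ) - ((m : ℝ) - 1) := by
      rw [Nat.cast_sub hm1n, Nat.cast_sub hm1, Nat.cast_one]
    rw [hcast1] at h1
    have hexp : (μ + (n : ℝ)) * F b - ((n : ℝ) - ((m : ℝ) - 1)) * ((q : ℝ) * F b)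
        = -(q : ℝ) * F b := by
      rw [hμ]
      ring
    linarith [h1, hexp]
  -- F vanishes identically
  have hq0 : (0 : ℝ) < q := by exact_mod_cast hq
  have hFzero : ∀ b, F b = 0 := by
    have hpos : ∀ l : Fin (m - 1),
        0 ≤ ∑ b : Fin (m - 1) → Fin q, F b * (∑ c : Fin q, F (Function.update b l c)) := by
      intro l
      have hkey : (q : ℝ) * ∑ b : Fin (m - 1) → Fin q,
            F b * (∑ c : Fin q, F (Function.update b l c))
          = ∑ b : Fin (m - 1) → Fin q, (∑ c : Fin q, F (Function.update b l c)) ^ 2 := by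
        rw [← aux_sum_update (fun z => F z * (∑ c : Fin q, F (Function.update z l c))) l]
        refine Finset.sum_congr rfl fun b _ => ?_
        have hin : ∀ c : Fin q,
            (∑ c' : Fin q, F (Function.update (Function.update b l c) l c'))
              = ∑ c' : Fin q, F (Function.update b l c') := by
          intro c
          exact Finset.sum_congr rfl fun c' _ => by rw [Function.update_idem]
        calc ∑ c : Fin q, F (Function.update b l c)
                * (∑ c' : Fin q, F (Function.update (Function.update b l c) l c'))
            = ∑ c : Fin q, F (Function.update b l c)
                * (∑ c' : Fin q, F (Function.update b l c')) :=
              Finset.sum_congr rfl fun c _ => by rw [hin c]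
          _ = (∑ c : Fin q, F (Function.update b l c))
                * (∑ c' : Fin q, F (Function.update b l c')) := by rw [Finset.sum_mul]
          _ = (∑ c : Fin q, F (Function.update b l c)) ^ 2 := by ring
      have hsq : 0 ≤ ∑ b : Fin (m - 1) → Fin q,
          (∑ c : Fin q, F (Function.update b l c)) ^ 2 :=
        Finset.sum_nonneg fun b _ => sq_nonneg _
      nlinarith [hkey, hsq, hq0]
    have htot : ∑ b : Fin (m - 1) → Fin q,
          F b * (∑ l : Fin (m - 1), ∑ c : Fin q, F (Function.update b l c))
        = ∑ l : Fin (m - 1), ∑ b : Fin (m - 1) → Fin q,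
            F b * (∑ c : Fin q, F (Function.update b l c)) := by
      calc ∑ b : Fin (m - 1) → Fin q,
            F b * (∑ l : Fin (m - 1), ∑ c : Fin q, F (Function.update b l c))
          = ∑ b : Fin (m - 1) → Fin q, ∑ l : Fin (m - 1),
              F b * (∑ c : Fin q, F (Function.update b l c)) :=
            Finset.sum_congr rfl fun b _ => Finset.mul_sum _ _ _
        _ = ∑ l : Fin (m - 1), ∑ b : Fin (m - 1) → Fin q,
              F b * (∑ c : Fin q, F (Function.update b l c)) := Finset.sum_comm
    have h1 : 0 ≤ ∑ b : Fin (m - 1) → Fin q,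
        F b * (∑ l : Fin (m - 1), ∑ c : Fin q, F (Function.update b l c)) := by
      rw [htot]
      exact Finset.sum_nonneg fun l _ => hpos l
    have h2 : ∑ b : Fin (m - 1) → Fin q,
          F b * (∑ l : Fin (m - 1), ∑ c : Fin q, F (Function.update b l c))
        = -(q : ℝ) * ∑ b : Fin (m - 1) → Fin q, (F b) ^ 2 := by
      rw [Finset.mul_sum]
      refine Finset.sum_congr rfl fun b _ => ?_
      rw [hrec b]
      ring
    rw [h2] at h1
    have h3 : 0 ≤ ∑ b : Fin (m - 1) → Fin q, (F b) ^ 2 :=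
      Finset.sum_nonneg fun b _ => sq_nonneg _
    have h6 : ∑ b : Fin (m - 1) → Fin q, (F b) ^ 2 ≤ 0 := by nlinarith [h1, hq0]
    have h4 : ∑ b : Fin (m - 1) → Fin q, (F b) ^ 2 = 0 := le_antisymm h6 h3
    intro b
    have h5 := (Finset.sum_eq_zero_iff_of_nonneg
      (fun b _ => sq_nonneg (F b))).mp h4 b (Finset.mem_univ b)
    exact pow_eq_zero_iff (two_ne_zero) |>.mp h5
  have hFa : ∑ x ∈ face a, f x = 0 := by
    have := hFzero a
    simpa only [hF] using this
  by_cases hall : ∀ x : Fin n → Fin q, (∀ l, x (i l) = a l) → f x = 0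
  · exact Or.inl hall
  · right
    push_neg at hall
    obtain ⟨x₀, hx₀face, hx₀⟩ := hall
    by_contra hcon
    push_neg at hcon
    have hothers : ∀ y ∈ face a, y ≠ x₀ → f y = 0 := by
      intro y hy hne
      exact hcon x₀ y (Ne.symm hne) hx₀face ((hfaceswap a y).mp hy) hx₀
    have hsum : ∑ x ∈ face a, f x = f x₀ :=
      Finset.sum_eq_single_of_mem x₀ ((hfaceswap a x₀).mpr hx₀face) hothers
    rw [hsum] at hFa
    exact hx₀ hFa
end

section
/- Let G be a distance-regular graph with intersection numbers satisfying p_{11}^1 ≠ 0 and p_{21}^2 ≠ 0, and let (S0, S1) be a spherical bitrade in G with S0 and S1 nonempty. Then d_{S0} = d_{S1} = 3. -/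
open scoped BigOperators

section Aux
variable {V : Type*} {G : SimpleGraph V}

lemma edist_two_common {u v : V} (h : G.edist u v = ((2:ℕ):ℕ∞)) :
    ∃ z, G.Adj u z ∧ G.Adj z v := by
  have hr : G.Reachable u v := SimpleGraph.reachable_of_edist_ne_top (by simp [h])
  obtain ⟨w, hw⟩ := hr.exists_walk_length_eq_edist
  rw [h] at hw
  have hl : w.length = 2 := by exact_mod_cast hw
  cases w with
  | nil => simp at hl
  | cons ha q =>
    simp [SimpleGraph.Walk.length_cons] at hl
    exact ⟨_, ha, q.adj_of_length_eq_one hl⟩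

/-- the bitrade sphere condition -/
def Cond (G : SimpleGraph V) (A B : Set V) : Prop :=
  ∀ x : V,
      ((∃! y, y ∈ A ∧ G.Adj x y) ∧ (∃! y, y ∈ B ∧ G.Adj x y)) ∨
        (∀ y, y ∈ A ∪ B → ¬ G.Adj x y)

lemma enat_exists_coe {e : ℕ∞} (h : e ≠ ⊤) : ∃ n : ℕ, e = (n : ℕ∞) := by
  lift e to ℕ using h
  exact ⟨_, rfl⟩

lemma Cond.swap {A B : Set V} (h : Cond G A B) : Cond G B A := by
  intro x
  rcases h x with ⟨h0, h1⟩ | h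
  · exact Or.inl ⟨h1, h0⟩
  · exact Or.inr fun y hy => h y (hy.elim Or.inr Or.inl)

lemma common_contra {A B : Set V} (hc : Cond G A B) {u v z : V}
    (hu : u ∈ A) (hv : v ∈ A) (huv : u ≠ v) (h1 : G.Adj z u) (h2 : G.Adj z v) : False := by
  rcases hc z with ⟨⟨y, _, hy⟩, _⟩ | h
  · exact huv ((hy u ⟨hu, h1⟩).trans (hy v ⟨hv, h2⟩).symm)
  · exact h u (Or.inl hu) h1

lemma min3 {A B : Set V} (p : ℕ → ℕ → ℕ → ℕ) (hreg : IsDistRegular G p)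
    (h111 : p 1 1 1 ≠ 0) (hc : Cond G A B) :
    ∀ u ∈ A, ∀ v ∈ A, u ≠ v → (3 : ℕ∞) ≤ G.edist u v := by
  intro u hu v hv huv
  by_contra hlt
  push_neg at hlt
  have hne : G.edist u v ≠ ⊤ := fun h => not_top_lt (h ▸ hlt)
  obtain ⟨n, hn⟩ := enat_exists_coe hne
  have hn3 : n < 3 := by
    rw [hn] at hlt; exact_mod_cast hlt
  have hn1 : 1 ≤ n := by
    rcases Nat.eq_zero_or_pos n with h | h
    · subst h
      have h0 : G.edist u v = 0 := by rw [hn]; simp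
      exact absurd (SimpleGraph.edist_eq_zero_iff.mp h0) huv
    · exact h
  interval_cases n
  · -- edist = 1
    obtain ⟨z, hz⟩ : {z : V | G.edist u z = ((1:ℕ):ℕ∞) ∧ G.edist z v = ((1:ℕ):ℕ∞)}.Nonempty := by
      apply Set.nonempty_of_ncard_ne_zero
      rw [hreg.2 1 1 1 u v hn]
      exact h111
    have ha1 : G.Adj u z := SimpleGraph.edist_eq_one_iff_adj.mp (by exact_mod_cast hz.1)
    have ha2 : G.Adj z v := SimpleGraph.edist_eq_one_iff_adj.mp (by exact_mod_cast hz.2)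
    exact common_contra hc hu hv huv ha1.symm ha2
  · -- edist = 2
    obtain ⟨z, hz1, hz2⟩ := edist_two_common (G := G) (u := u) (v := v) hn
    exact common_contra hc hu hv huv hz1.symm hz2

lemma exists_dist3 {A B : Set V} (p : ℕ → ℕ → ℕ → ℕ) (hreg : IsDistRegular G p)
    (h111 : p 1 1 1 ≠ 0) (h212 : p 2 1 2 ≠ 0) (hdisj : Disjoint A B)
    (hc : Cond G A B) (hB : B.Nonempty) :
    ∀ u ∈ A, ∃ v ∈ A, u ≠ v ∧ G.edist u v = 3 := by
  intro u hu
  have hmin := min3 p hreg h111 hc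
  -- u has a neighbor
  obtain ⟨w1, hw1⟩ := hB
  have huw1 : u ≠ w1 := fun h => hdisj.ne_of_mem hu hw1 h
  obtain ⟨wk, hwk⟩ := (hreg.1.exists_walk_length_eq_edist u w1)
  obtain ⟨x, hx⟩ : ∃ x, G.Adj u x := by
    cases wk with
    | nil => exact absurd rfl huw1
    | cons ha _ => exact ⟨_, ha⟩
  -- sphere of x contains u ∈ A, hence some w ∈ B
  obtain ⟨w, ⟨hwB, hxw⟩, -⟩ : ∃! y, y ∈ B ∧ G.Adj x y := by
    rcases hc x with ⟨-, h1⟩ | h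
    · exact h1
    · exact absurd hx.symm (h u (Or.inl hu))
  -- edist u w = 2
  have huw : G.edist u w = ((2:ℕ):ℕ∞) := by
    have hle : G.edist u w ≤ 2 := by
      calc G.edist u w ≤ G.edist u x + G.edist x w := G.edist_triangle
        _ = 1 + 1 := by
            rw [SimpleGraph.edist_eq_one_iff_adj.mpr hx,
              SimpleGraph.edist_eq_one_iff_adj.mpr hxw]
        _ = 2 := by norm_num
    have hne1 : G.edist u w ≠ 1 := by
      intro h1
      have hadj : G.Adj u w := SimpleGraph.edist_eq_one_iff_adj.mp h1
      rcases hc u with ⟨⟨v, ⟨hvA, hvadj⟩, -⟩, -⟩ | h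
      · have h3 : (3:ℕ∞) ≤ G.edist u v := hmin u hu v hvA hvadj.ne
        rw [SimpleGraph.edist_eq_one_iff_adj.mpr hvadj] at h3
        exact absurd h3 (by norm_num)
      · exact h w (Or.inr hwB) hadj
    have hne0 : G.edist u w ≠ 0 := fun h =>
      hdisj.ne_of_mem hu hwB (SimpleGraph.edist_eq_zero_iff.mp h)
    have hnetop : G.edist u w ≠ ⊤ := fun h => by simp [h] at hle
    obtain ⟨n, hn⟩ := enat_exists_coe hnetop
    rw [hn] at hle hne1 hne0 ⊢
    have hn2 : n = 2 := by
      have a2 : n ≤ 2 := by exact_mod_cast hle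
      have a1 : n ≠ 1 := by exact_mod_cast hne1
      have a0 : n ≠ 0 := by exact_mod_cast hne0
      omega
    exact_mod_cast hn2
  -- get z at distance 2 from u, adjacent to w
  obtain ⟨z, hz1, hz2⟩ : {z : V | G.edist u z = ((2:ℕ):ℕ∞) ∧ G.edist z w = ((1:ℕ):ℕ∞)}.Nonempty := by
    apply Set.nonempty_of_ncard_ne_zero
    rw [hreg.2 2 1 2 u w huw]
    exact h212
  have hzw : G.Adj z w := SimpleGraph.edist_eq_one_iff_adj.mp (by exact_mod_cast hz2)
  -- sphere of z contains w ∈ B, hence some v ∈ A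
  obtain ⟨v, ⟨hvA, hzv⟩, -⟩ : ∃! y, y ∈ A ∧ G.Adj z y := by
    rcases hc z with ⟨h0, -⟩ | h
    · exact h0
    · exact absurd hzw (h w (Or.inr hwB))
  have huv : u ≠ v := by
    rintro rfl
    rw [SimpleGraph.edist_eq_one_iff_adj.mpr hzv.symm] at hz1
    exact absurd hz1 (by norm_num)
  refine ⟨v, hvA, huv, le_antisymm ?_ (hmin u hu v hvA huv)⟩
  calc G.edist u v ≤ G.edist u z + G.edist z v := G.edist_triangle
    _ = 3 := by
        rw [hz1, SimpleGraph.edist_eq_one_iff_adj.mpr hzv]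
        norm_num

lemma hasMinDist3 {A B : Set V} (p : ℕ → ℕ → ℕ → ℕ) (hreg : IsDistRegular G p)
    (h111 : p 1 1 1 ≠ 0) (h212 : p 2 1 2 ≠ 0) (hdisj : Disjoint A B)
    (hc : Cond G A B) (hA : A.Nonempty) (hB : B.Nonempty) :
    HasMinDist G A 3 := by
  constructor
  · exact fun x hx y hy hxy => by exact_mod_cast min3 p hreg h111 hc x hx y hy hxy
  · obtain ⟨u, hu⟩ := hA
    obtain ⟨v, hv, huv, hd⟩ := exists_dist3 p hreg h111 h212 hdisj hc hB u hu
    exact ⟨u, hu, v, hv, huv, by exact_mod_cast hd⟩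

end Aux

/-- In a distance-regular graph with `p_{11}^1 ≠ 0` and `p_{21}^2 ≠ 0`, both
parts of a spherical bitrade have minimum distance exactly 3. -/
theorem statement4 {V : Type*} (G : SimpleGraph V) (p : ℕ → ℕ → ℕ → ℕ)
    (hreg : IsDistRegular G p) (h111 : p 1 1 1 ≠ 0) (h212 : p 2 1 2 ≠ 0)
    (S0 S1 : Set V) (hbt : IsSphericalBitrade G S0 S1) :
    HasMinDist G S0 3 ∧ HasMinDist G S1 3 := by
  obtain ⟨hdisj, hA, hB, hc⟩ := hbt
  exact ⟨hasMinDist3 p hreg h111 h212 hdisj hc hA hB,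
         hasMinDist3 p hreg h111 h212 hdisj.symm (Cond.swap hc) hB hA⟩
end

section
/- Let q ≥ 3 and let the alphabet be A = {0, 1, …, q−1}. Define S0 = {(π(0), π(1), …, π(q−1)) : π an even permutation of A} and S1 = {(π(0), π(1), …, π(q−1)) : π an odd permutation of A}. Then (S0, S1) is a spherical bitrade in the Hamming graph H(q, q) of volume q!/2. -/
open scoped BigOperators

section Aux
variable {q : ℕ}

lemma hdist_one_iff (x y : Fin q → Fin q) :
    hammingDist x y = 1 ↔ ∃ i, x i ≠ y i ∧ ∀ j, j ≠ i → x j = y j := by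
  unfold hammingDist
  rw [Finset.card_eq_one]
  constructor
  · rintro ⟨i, hi⟩
    refine ⟨i, ?_, ?_⟩
    · have : i ∈ Finset.univ.filter fun j => x j ≠ y j := hi ▸ Finset.mem_singleton_self i
      simpa using this
    · intro j hj
      by_contra hne
      have : j ∈ Finset.univ.filter fun j => x j ≠ y j := by simpa using hne
      rw [hi, Finset.mem_singleton] at this
      exact hj this
  · rintro ⟨i, hi, hoff⟩
    refine ⟨i, ?_⟩
    ext j
    simp only [Finset.mem_filter, Finset.mem_univ, true_and, Finset.mem_singleton]
    constructor
    · intro hne; by_contra hji; exact hne (hoff j hji)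
    · rintro rfl; exact hi

lemma perm_eq_of_agree_off (π σ : Equiv.Perm (Fin q)) (i : Fin q)
    (h : ∀ j, j ≠ i → π j = σ j) : π = σ := by
  have key : π i = σ i := by
    set k := σ.symm (π i) with hk
    have hσk : σ k = π i := σ.apply_symm_apply _
    by_cases hki : k = i
    · rw [← hσk, hki]
    · exfalso
      have : π k = π i := by rw [h k hki, hσk]
      exact hki (π.injective this)
  refine Equiv.Perm.ext fun j => ?_
  by_cases hji : j = i
  · rw [hji]; exact key
  · exact h j hji
lemma key_uniq (x : Fin q → Fin q) (σ : Equiv.Perm (Fin q)) (i : Fin q)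
    (hi : x i ≠ σ i) (hoff : ∀ j, j ≠ i → x j = σ j)
    (ρ : Equiv.Perm (Fin q)) (hρ : hammingDist x ⇑ρ = 1) :
    ρ = σ ∨ ρ = σ * Equiv.swap i (σ.symm (x i)) := by
  set j := σ.symm (x i) with hjdef
  have hσj : σ j = x i := σ.apply_symm_apply _
  have hij : j ≠ i := by
    intro h; rw [h] at hσj; exact hi hσj.symm
  have hxj : x j = x i := by rw [hoff j hij, hσj]
  obtain ⟨k, hk, hkoff⟩ := (hdist_one_iff x ⇑ρ).mp hρ
  by_cases hki : k = i
  · left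
    subst hki
    refine perm_eq_of_agree_off ρ σ k fun l hl => ?_
    rw [← hkoff l hl, hoff l hl]
  · by_cases hkj : k = j
    · right
      subst hkj
      refine perm_eq_of_agree_off ρ _ j fun l hl => ?_
      rw [← hkoff l hl]
      by_cases hli : l = i
      · subst hli
        show x l = σ (Equiv.swap l j l)
        rw [Equiv.swap_apply_left, hσj]
      · show x l = σ (Equiv.swap i j l)
        rw [Equiv.swap_apply_of_ne_of_ne hli hl, hoff l hli]
    · exfalso
      have h1 : ρ i = x i := (hkoff i (fun h => hki h.symm)).symm
      have h2 : ρ j = x j := (hkoff j (fun h => hkj h.symm)).symm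
      have : ρ i = ρ j := by rw [h1, h2, hxj]
      exact hij (ρ.injective this).symm

lemma tau_dist (x : Fin q → Fin q) (σ : Equiv.Perm (Fin q)) (i : Fin q)
    (hi : x i ≠ σ i) (hoff : ∀ j, j ≠ i → x j = σ j) :
    hammingDist x ⇑(σ * Equiv.swap i (σ.symm (x i))) = 1 := by
  set j := σ.symm (x i) with hjdef
  have hσj : σ j = x i := σ.apply_symm_apply _
  have hij : j ≠ i := by
    intro h; rw [h] at hσj; exact hi hσj.symm
  have hxj : x j = x i := by rw [hoff j hij, hσj]
  rw [hdist_one_iff]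
  refine ⟨j, ?_, ?_⟩
  · show x j ≠ σ (Equiv.swap i j j)
    rw [Equiv.swap_apply_right, hxj]
    exact hi
  · intro l hl
    by_cases hli : l = i
    · subst hli
      show x l = σ (Equiv.swap l j l)
      rw [Equiv.swap_apply_left, hσj]
    · show x l = σ (Equiv.swap i j l)
      rw [Equiv.swap_apply_of_ne_of_ne hli hl, hoff l hli]
end Aux

/-- For `q ≥ 3`, the set `S0` of tuples `(π(0),…,π(q-1))` over even
permutations `π` and the set `S1` of such tuples over odd permutations form a spherical
bitrade in `H(q,q)` of volume `q!/2`. -/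
theorem statement10 (q : ℕ) (hq : 3 ≤ q) :
    IsSphericalBitrade (hammingGraph q q)
      {x : Fin q → Fin q | ∃ π : Equiv.Perm (Fin q), Equiv.Perm.sign π = 1 ∧ x = ⇑π}
      {x : Fin q → Fin q | ∃ π : Equiv.Perm (Fin q), Equiv.Perm.sign π = -1 ∧ x = ⇑π} ∧
    {x : Fin q → Fin q | ∃ π : Equiv.Perm (Fin q), Equiv.Perm.sign π = 1 ∧ x = ⇑π}.ncard =
      Nat.factorial q / 2 := by
  have hinj : Function.Injective (fun π : Equiv.Perm (Fin q) => ⇑π) :=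
    fun a b h => Equiv.coe_fn_injective h
  have a0 : Fin q := ⟨0, by omega⟩
  have a1 : Fin q := ⟨1, by omega⟩
  haveI : Nontrivial (Fin q) := ⟨⟨⟨0, by omega⟩, ⟨1, by omega⟩, by simp [Fin.ext_iff]⟩⟩
  have hadj : ∀ x y : Fin q → Fin q,
      (hammingGraph q q).Adj x y ↔ hammingDist x y = 1 := fun x y => Iff.rfl
  constructor
  · refine ⟨?_, ?_, ?_, ?_⟩
    · rw [Set.disjoint_left]
      rintro x ⟨π, hπ, rfl⟩ ⟨σ, hσ, hx⟩
      have : π = σ := hinj hx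
      rw [this, hσ] at hπ
      exact absurd hπ (by decide)
    · exact ⟨⇑(1 : Equiv.Perm (Fin q)), 1, Equiv.Perm.sign_one, rfl⟩
    · refine ⟨⇑(Equiv.swap (⟨0, by omega⟩ : Fin q) ⟨1, by omega⟩), _, ?_, rfl⟩
      exact Equiv.Perm.sign_swap (by simp [Fin.ext_iff])
    · intro x
      by_cases h : ∃ σ : Equiv.Perm (Fin q), hammingDist x ⇑σ = 1
      · left
        obtain ⟨σ, hσd⟩ := h
        obtain ⟨i, hi, hoff⟩ := (hdist_one_iff x ⇑σ).mp hσd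
        set τ := σ * Equiv.swap i (σ.symm (x i)) with hτdef
        have hτd : hammingDist x ⇑τ = 1 := tau_dist x σ i hi hoff
        have hji : σ.symm (x i) ≠ i := by
          intro h
          apply hi
          rw [← σ.apply_symm_apply (x i), h]
        have hτs : Equiv.Perm.sign τ = -Equiv.Perm.sign σ := by
          rw [hτdef, map_mul, Equiv.Perm.sign_swap (Ne.symm hji), mul_neg_one]
        have huniq : ∀ ρ : Equiv.Perm (Fin q), hammingDist x ⇑ρ = 1 → ρ = σ ∨ ρ = τ :=
          fun ρ hρ => key_uniq x σ i hi hoff ρ hρ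
        have main : ∀ s : ℤˣ, ∃ π : Equiv.Perm (Fin q),
            (Equiv.Perm.sign π = s ∨ True) → True := fun _ => ⟨σ, fun _ => trivial⟩
        -- helper to build each ExistsUnique
        have build : ∀ s : ℤˣ, ∀ π : Equiv.Perm (Fin q), Equiv.Perm.sign π = s →
            hammingDist x ⇑π = 1 → (π = σ ∨ π = τ) →
            ∃! y, (y ∈ {x : Fin q → Fin q |
              ∃ π : Equiv.Perm (Fin q), Equiv.Perm.sign π = s ∧ x = ⇑π}) ∧
              (hammingGraph q q).Adj x y := by
          intro s π hπs hπd hπor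
          refine ⟨⇑π, ⟨⟨π, hπs, rfl⟩, hπd⟩, ?_⟩
          rintro y ⟨⟨ρ, hρs, rfl⟩, hρd⟩
          rcases huniq ρ hρd with rfl | rfl
          · rcases hπor with rfl | rfl
            · rfl
            · exfalso
              rw [hτs, hρs] at hπs
              rcases Int.units_eq_one_or s with rfl | rfl
              · exact absurd hπs (by decide)
              · exact absurd hπs (by decide)
          · rcases hπor with rfl | rfl
            · exfalso
              rw [hτs, hπs] at hρs
              rcases Int.units_eq_one_or s with rfl | rfl
              · exact absurd hρs (by decide)
              · exact absurd hρs (by decide)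
            · rfl
        rcases Int.units_eq_one_or (Equiv.Perm.sign σ) with hs | hs
        · have hτs1 : Equiv.Perm.sign τ = -1 := by rw [hτs, hs]
          exact ⟨build 1 σ hs hσd (Or.inl rfl), build (-1) τ hτs1 hτd (Or.inr rfl)⟩
        · have hτs1 : Equiv.Perm.sign τ = 1 := by rw [hτs, hs, neg_neg]
          exact ⟨build 1 τ hτs1 hτd (Or.inr rfl), build (-1) σ hs hσd (Or.inl rfl)⟩
      · right
        rintro y (⟨π, -, rfl⟩ | ⟨π, -, rfl⟩) hy <;> exact h ⟨π, hy⟩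
  · have himg : {x : Fin q → Fin q | ∃ π : Equiv.Perm (Fin q),
        Equiv.Perm.sign π = 1 ∧ x = ⇑π} =
        (fun π : Equiv.Perm (Fin q) => ⇑π) '' {π | Equiv.Perm.sign π = 1} := by
      ext y
      simp only [Set.mem_setOf_eq, Set.mem_image]
      constructor
      · rintro ⟨π, h1, rfl⟩; exact ⟨π, h1, rfl⟩
      · rintro ⟨π, h1, rfl⟩; exact ⟨π, h1, rfl⟩
    rw [himg, Set.ncard_image_of_injective _ hinj]
    have h2 : 2 * Fintype.card (alternatingGroup (Fin q)) =
        Fintype.card (Equiv.Perm (Fin q)) := two_mul_card_alternatingGroup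
    rw [Fintype.card_perm, Fintype.card_fin] at h2
    have hcard : {π : Equiv.Perm (Fin q) | Equiv.Perm.sign π = 1}.ncard =
        Fintype.card (alternatingGroup (Fin q)) := by
      have e : {π : Equiv.Perm (Fin q) | Equiv.Perm.sign π = 1} ≃
          alternatingGroup (Fin q) :=
        Equiv.subtypeEquivRight fun π => Equiv.Perm.mem_alternatingGroup.symm
      exact (Nat.card_coe_set_eq _).symm.trans
        ((Nat.card_congr e).trans Nat.card_eq_fintype_card)
    rw [hcard]
    omega
end

section
/- For every integer q ≥ 3 and every integer r ≥ 1 there exists a spherical bitrade in the Hamming graph H(qr, q) of volume (q!)^r / 2. -/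
open scoped BigOperators

section AuxST11
open Function
variable {q r : ℕ}

private def emb11 (σ : Fin r → Equiv.Perm (Fin q)) : Fin (q*r) → Fin q :=
  fun i => σ (finProdFinEquiv.symm i).2 (finProdFinEquiv.symm i).1

private def blocks11 (x : Fin (q*r) → Fin q) (b : Fin r) : Fin q → Fin q :=
  fun a => x (finProdFinEquiv (a, b))

private def eps11 (σ : Fin r → Equiv.Perm (Fin q)) : ℤˣ :=
  ∏ b : Fin r, Equiv.Perm.sign (σ b)

private lemma blocks11_emb (σ : Fin r → Equiv.Perm (Fin q)) (b : Fin r) :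
    blocks11 (emb11 σ) b = ⇑(σ b) := by
  funext a; simp [blocks11, emb11]

private lemma emb11_inj : Function.Injective (emb11 (q := q) (r := r)) := by
  intro σ τ h
  funext b
  apply Equiv.coe_fn_injective
  show ⇑(σ b) = ⇑(τ b)
  rw [← blocks11_emb σ b, ← blocks11_emb τ b, h]

private lemma dist_blocks11 (x y : Fin (q*r) → Fin q) :
    hammingDist x y = ∑ b : Fin r, hammingDist (blocks11 x b) (blocks11 y b) := by
  classical
  have h1 : hammingDist x y
      = (Finset.univ.filter fun p : Fin q × Fin r =>
          blocks11 x p.2 p.1 ≠ blocks11 y p.2 p.1).card := by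
    rw [hammingDist]
    apply Finset.card_equiv finProdFinEquiv.symm
    intro i
    simp only [Finset.mem_filter, Finset.mem_univ, true_and]
    simp only [blocks11, Prod.mk.eta, Equiv.apply_symm_apply]
  rw [h1]
  rw [Finset.card_eq_sum_card_fiberwise (f := Prod.snd) (t := Finset.univ)
    (fun _ _ => Finset.mem_univ _)]
  apply Finset.sum_congr rfl
  intro b _
  rw [hammingDist]
  apply Finset.card_nbij' (fun p => p.1) (fun a => (a, b))
  · intro p hp
    simp only [Finset.mem_coe, Finset.mem_filter, Finset.mem_univ, true_and] at hp ⊢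
    obtain ⟨h1, h2⟩ := hp; subst h2; exact h1
  · intro a ha
    simp only [Finset.mem_coe, Finset.mem_filter, Finset.mem_univ, true_and] at ha ⊢
    exact ⟨ha, trivial⟩
  · intro p hp
    simp only [Finset.mem_coe, Finset.mem_filter] at hp
    exact Prod.ext rfl hp.2.symm
  · intro a _; rfl

private lemma sum_eq_one_iff11 (f : Fin r → ℕ) :
    ∑ b, f b = 1 ↔ ∃ b0, f b0 = 1 ∧ ∀ b, b ≠ b0 → f b = 0 := by
  constructor
  · intro hs
    have hex : ∃ b0, f b0 ≠ 0 := by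
      by_contra hc
      push_neg at hc
      rw [Finset.sum_eq_zero (fun b _ => hc b)] at hs
      omega
    obtain ⟨b0, hb0⟩ := hex
    rw [← Finset.add_sum_erase _ f (Finset.mem_univ b0)] at hs
    have h0 : ∑ b ∈ Finset.univ.erase b0, f b = 0 := by omega
    refine ⟨b0, by omega, fun b hb => ?_⟩
    exact (Finset.sum_eq_zero_iff).mp h0 b (Finset.mem_erase.mpr ⟨hb, Finset.mem_univ b⟩)
  · rintro ⟨b0, h1, h0⟩
    rw [← Finset.add_sum_erase _ f (Finset.mem_univ b0), h1,
      Finset.sum_eq_zero (fun b hb => h0 b (Finset.mem_erase.mp hb).1)]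
    omega

private lemma adj_emb11_iff (x : Fin (q*r) → Fin q) (σ : Fin r → Equiv.Perm (Fin q)) :
    (hammingGraph (q*r) q).Adj x (emb11 σ) ↔
      ∃ b0, hammingDist (blocks11 x b0) ⇑(σ b0) = 1 ∧
        ∀ b, b ≠ b0 → blocks11 x b = ⇑(σ b) := by
  show hammingDist x (emb11 σ) = 1 ↔ _
  rw [dist_blocks11, sum_eq_one_iff11]
  constructor
  · rintro ⟨b0, h1, h0⟩
    exact ⟨b0, by rwa [blocks11_emb] at h1,
      fun b hb => by have := h0 b hb; rwa [hammingDist_eq_zero, blocks11_emb] at this⟩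
  · rintro ⟨b0, h1, h0⟩
    exact ⟨b0, by rwa [blocks11_emb], fun b hb => by
      rw [blocks11_emb, hammingDist_eq_zero]; exact h0 b hb⟩

private lemma eps11_update (σ : Fin r → Equiv.Perm (Fin q)) (b0 : Fin r) {a b : Fin q}
    (hab : a ≠ b) :
    eps11 (Function.update σ b0 (Equiv.swap a b * σ b0)) = - eps11 σ := by
  unfold eps11
  have hfun : (fun c => Equiv.Perm.sign (Function.update σ b0 (Equiv.swap a b * σ b0) c))
      = Function.update (fun c => Equiv.Perm.sign (σ c)) b0
          (Equiv.Perm.sign (Equiv.swap a b * σ b0)) := by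
    funext c
    rcases eq_or_ne c b0 with rfl | hc
    · simp
    · simp [Function.update_of_ne hc]
  rw [hfun, Finset.prod_update_of_mem (Finset.mem_univ b0)]
  rw [Equiv.Perm.sign_mul, Equiv.Perm.sign_swap hab, ← Finset.erase_eq,
    ← Finset.mul_prod_erase Finset.univ (fun c => Equiv.Perm.sign (σ c)) (Finset.mem_univ b0)]
  simp [neg_mul, mul_assoc]

private lemma dist_one_iff11 {g h : Fin q → Fin q} :
    hammingDist g h = 1 ↔ ∃ i, g i ≠ h i ∧ ∀ j, j ≠ i → g j = h j := by
  rw [hammingDist, Finset.card_eq_one]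
  constructor
  · rintro ⟨i, hi⟩
    refine ⟨i, ?_, ?_⟩
    · have : i ∈ Finset.univ.filter fun j => g j ≠ h j := hi ▸ Finset.mem_singleton_self i
      simpa using this
    · intro j hj
      by_contra hne
      have : j ∈ Finset.univ.filter fun j => g j ≠ h j := by simpa using hne
      rw [hi, Finset.mem_singleton] at this
      exact hj this
  · rintro ⟨i, hne, heq⟩
    refine ⟨i, ?_⟩
    ext j
    simp only [Finset.mem_filter, Finset.mem_univ, true_and, Finset.mem_singleton]
    constructor
    · intro hj; by_contra hji; exact hj (heq j hji)
    · rintro rfl; exact hne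

private lemma no_bij_adjacent11 {g : Fin q → Fin q} (hg : g.Bijective)
    (σ : Equiv.Perm (Fin q)) : hammingDist g ⇑σ ≠ 1 := by
  intro hd
  obtain ⟨i, hne, heq⟩ := dist_one_iff11.mp hd
  obtain ⟨j, hj⟩ := hg.surjective (σ i)
  have hji : j ≠ i := by rintro rfl; exact hne hj
  have h2 : σ i = σ j := by rw [← hj, heq j hji]
  exact hji (σ.injective h2.symm)

private lemma key11 (g : Fin q → Fin q) (σ : Equiv.Perm (Fin q))
    (hd : hammingDist g ⇑σ = 1) :
    ∃ a b : Fin q, a ≠ b ∧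
      hammingDist g ⇑(Equiv.swap a b * σ) = 1 ∧
      ∀ τ : Equiv.Perm (Fin q), hammingDist g ⇑τ = 1 →
        τ = σ ∨ τ = Equiv.swap a b * σ := by
  obtain ⟨i, hne, heq⟩ := dist_one_iff11.mp hd
  obtain ⟨j, hj⟩ : ∃ j, σ j = g i := ⟨σ.symm (g i), σ.apply_symm_apply _⟩
  have hji : j ≠ i := by rintro rfl; exact hne hj.symm
  have hgj : g j = g i := (heq j hji).trans hj
  refine ⟨σ i, g i, Ne.symm hne, ?_, ?_⟩
  · rw [dist_one_iff11]
    refine ⟨j, ?_, ?_⟩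
    · have : (Equiv.swap (σ i) (g i) * σ) j = σ i := by
        simp [Equiv.Perm.mul_apply, hj, Equiv.swap_apply_right]
      rw [this, hgj]; exact hne
    · intro a haj
      rcases eq_or_ne i a with rfl | hai
      · have : (Equiv.swap (σ i) (g i) * σ) i = g i := by
          simp [Equiv.Perm.mul_apply, Equiv.swap_apply_left]
        rw [this]
      · replace hai := hai.symm
        have h1 : σ a ≠ σ i := fun h => hai (σ.injective h)
        have h2 : σ a ≠ g i := fun h => haj (σ.injective (h.trans hj.symm))
        have : (Equiv.swap (σ i) (g i) * σ) a = σ a := by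
          simp [Equiv.Perm.mul_apply, Equiv.swap_apply_of_ne_of_ne h1 h2]
        rw [this]; exact heq a hai
  · intro τ hdτ
    obtain ⟨i', hne', heq'⟩ := dist_one_iff11.mp hdτ
    have hmem : i' = i ∨ i' = j := by
      by_contra hc
      push_neg at hc
      have h1 : τ i = g i := (heq' i (Ne.symm hc.1)).symm
      have h2 : τ j = g j := (heq' j (Ne.symm hc.2)).symm
      exact hji (τ.injective (h2.trans (hgj.trans h1.symm)))
    rcases hmem with rfl | rfl
    · left
      apply Equiv.ext
      intro a
      rcases eq_or_ne a i' with rfl | hai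
      · obtain ⟨c, hc⟩ : ∃ c, τ c = σ a := ⟨τ.symm (σ a), τ.apply_symm_apply _⟩
        rcases eq_or_ne c a with rfl | hca
        · exact hc
        · exfalso
          have h3 : σ c = σ a := by rw [← heq c hca, heq' c hca, hc]
          exact hca (σ.injective h3)
      · rw [← heq' a hai, heq a hai]
    · right
      apply Equiv.ext
      intro a
      rcases eq_or_ne a i' with rfl | haj
      · have hrhs : (Equiv.swap (σ i) (g i) * σ) a = σ i := by
          simp [Equiv.Perm.mul_apply, hj, Equiv.swap_apply_right]
        rw [hrhs]
        obtain ⟨c, hc⟩ : ∃ c, τ c = σ i := ⟨τ.symm (σ i), τ.apply_symm_apply _⟩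
        rcases eq_or_ne c a with rfl | hca
        · exact hc
        · exfalso
          have hgc : g c = τ c := heq' c hca
          rcases eq_or_ne c i with rfl | hci
          · exact hne (hgc.trans hc)
          · have h3 : σ c = σ i := by rw [← heq c hci, hgc, hc]
            exact hci (σ.injective h3)
      · rcases eq_or_ne a i with rfl | hai
        · have hrhs : (Equiv.swap (σ a) (g a) * σ) a = g a := by
            simp [Equiv.Perm.mul_apply, Equiv.swap_apply_left]
          rw [hrhs, ← heq' a haj]
        · have h1 : σ a ≠ σ i := fun h => hai (σ.injective h)
          have h2 : σ a ≠ g i := fun h => haj (σ.injective (h.trans hj.symm))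
          have hrhs : (Equiv.swap (σ i) (g i) * σ) a = σ a := by
            simp [Equiv.Perm.mul_apply, Equiv.swap_apply_of_ne_of_ne h1 h2]
          rw [hrhs, ← heq' a haj, heq a hai]

private lemma negne11 (u : ℤˣ) : -u ≠ u := by
  rcases Int.units_eq_one_or u with rfl | rfl <;> decide

end AuxST11

/-- For every `q ≥ 3` and `r ≥ 1` there is a spherical bitrade in `H(qr,q)`
of volume `(q!)^r / 2`. -/
theorem statement11 (q r : ℕ) (hq : 3 ≤ q) (hr : 1 ≤ r) :
    ∃ S0 S1 : Set (Fin (q * r) → Fin q),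
      IsSphericalBitrade (hammingGraph (q * r) q) S0 S1 ∧
        2 * S0.ncard = (Nat.factorial q) ^ r := by
  classical
  set E : Set (Fin r → Equiv.Perm (Fin q)) := {σ | eps11 σ = 1} with hE
  set O : Set (Fin r → Equiv.Perm (Fin q)) := {σ | eps11 σ = -1} with hO
  refine ⟨emb11 '' E, emb11 '' O, ⟨?_, ?_, ?_, ?_⟩, ?_⟩
  · -- disjoint
    rw [Set.disjoint_left]
    rintro z ⟨σ, hσ, rfl⟩ ⟨τ, hτ, hzz⟩
    obtain rfl := emb11_inj hzz
    rw [hE] at hσ; rw [hO] at hτ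
    rw [Set.mem_setOf_eq] at hσ hτ
    rw [hσ] at hτ
    exact absurd hτ (by decide)
  · -- S0 nonempty
    exact ⟨emb11 (fun _ => 1), ⟨fun _ => 1, by simp [hE, eps11], rfl⟩⟩
  · -- S1 nonempty
    have hb0 : (0 : ℕ) < r := hr
    have hab : (⟨0, by omega⟩ : Fin q) ≠ ⟨1, by omega⟩ := by
      intro h; simpa using congrArg Fin.val h
    set σid : Fin r → Equiv.Perm (Fin q) := fun _ => 1 with hσid
    refine ⟨emb11 (Function.update σid ⟨0, hb0⟩
      (Equiv.swap (⟨0, by omega⟩ : Fin q) ⟨1, by omega⟩ * σid ⟨0, hb0⟩)),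
      Set.mem_image_of_mem _ ?_⟩
    rw [hO, Set.mem_setOf_eq, eps11_update _ _ hab]
    have h1 : eps11 σid = 1 := by simp [hσid, eps11]
    rw [h1]
  · -- the sphere condition
    intro x
    by_cases hex : ∃ σ : Fin r → Equiv.Perm (Fin q), (hammingGraph (q*r) q).Adj x (emb11 σ)
    · left
      obtain ⟨σw, hadjw⟩ := hex
      obtain ⟨b1, hd1, heq1⟩ := (adj_emb11_iff x σw).mp hadjw
      obtain ⟨a, b, hab, hd2, huniq⟩ := key11 (blocks11 x b1) (σw b1) hd1
      set σ' := Function.update σw b1 (Equiv.swap a b * σw b1) with hσ'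
      have hadj' : (hammingGraph (q*r) q).Adj x (emb11 σ') := by
        rw [adj_emb11_iff]
        refine ⟨b1, ?_, fun c hc => ?_⟩
        · rw [hσ', Function.update_self]; exact hd2
        · rw [hσ', Function.update_of_ne hc]; exact heq1 c hc
      have heps' : eps11 σ' = - eps11 σw := eps11_update σw b1 hab
      have htau : ∀ τ, (hammingGraph (q*r) q).Adj x (emb11 τ) → τ = σw ∨ τ = σ' := by
        intro τ hτ
        obtain ⟨b2, hd2', heq2'⟩ := (adj_emb11_iff x τ).mp hτ
        have hbb : b2 = b1 := by
          by_contra hbb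
          have h3 : blocks11 x b1 = ⇑(τ b1) := heq2' b1 (fun h => hbb h.symm)
          rw [h3] at hd1
          exact no_bij_adjacent11 (τ b1).bijective (σw b1) hd1
        subst hbb
        have hcases := huniq (τ b2) hd2'
        have hrest : ∀ c, c ≠ b2 → τ c = σw c := fun c hc =>
          Equiv.coe_fn_injective (show ⇑(τ c) = ⇑(σw c) by rw [← heq2' c hc, heq1 c hc])
        rcases hcases with h | h
        · left; funext c
          rcases eq_or_ne c b2 with rfl | hc
          · exact h
          · exact hrest c hc
        · right; funext c
          rcases eq_or_ne c b2 with rfl | hc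
          · rw [hσ', Function.update_self]; exact h
          · rw [hσ', Function.update_of_ne hc]; exact hrest c hc
      have claim : ∀ ρ ρ2, (hammingGraph (q*r) q).Adj x (emb11 ρ) →
          (∀ τ, (hammingGraph (q*r) q).Adj x (emb11 τ) → τ = ρ ∨ τ = ρ2) →
          eps11 ρ2 ≠ eps11 ρ →
          ∃! y, y ∈ emb11 '' {σ | eps11 σ = eps11 ρ} ∧ (hammingGraph (q*r) q).Adj x y := by
        intro ρ ρ2 hadj hu hne
        refine ⟨emb11 ρ, ⟨⟨ρ, rfl, rfl⟩, hadj⟩, ?_⟩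
        rintro z ⟨⟨τ, hτ, rfl⟩, hadjz⟩
        rcases hu τ hadjz with rfl | rfl
        · rfl
        · exact absurd hτ hne
      have h1 := claim σw σ' hadjw htau (by rw [heps']; exact negne11 _)
      have h2 := claim σ' σw hadj' (fun τ h => (htau τ h).symm)
        (by rw [heps']; exact fun h => negne11 _ h.symm)
      rcases Int.units_eq_one_or (eps11 σw) with hw | hw
      · rw [hw] at h1
        rw [heps', hw] at h2
        exact ⟨h1, h2⟩
      · rw [hw] at h1
        rw [heps', hw, neg_neg] at h2
        exact ⟨h2, h1⟩
    · right
      rintro y hy hadj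
      rcases hy with ⟨σ, _, rfl⟩ | ⟨σ, _, rfl⟩ <;> exact hex ⟨σ, hadj⟩
  · -- counting
    rw [Set.ncard_image_of_injective _ emb11_inj]
    have hb0 : (0 : ℕ) < r := hr
    have hab : (⟨0, by omega⟩ : Fin q) ≠ ⟨1, by omega⟩ := by
      intro h; simpa using congrArg Fin.val h
    set φ : (Fin r → Equiv.Perm (Fin q)) → (Fin r → Equiv.Perm (Fin q)) :=
      fun σ => Function.update σ ⟨0, hb0⟩
        (Equiv.swap ⟨0, by omega⟩ ⟨1, by omega⟩ * σ ⟨0, hb0⟩) with hφ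
    have hφeps : ∀ σ, eps11 (φ σ) = - eps11 σ := fun σ => eps11_update σ _ hab
    have hφinv : Function.Involutive φ := by
      intro σ
      rw [hφ]
      simp only [Function.update_self, Function.update_idem]
      rw [← mul_assoc, Equiv.swap_mul_self, one_mul, Function.update_eq_self]
    have himg : φ '' E = O := by
      ext τ
      constructor
      · rintro ⟨σ, hσ, rfl⟩
        rw [hE, Set.mem_setOf_eq] at hσ
        rw [hO, Set.mem_setOf_eq, hφeps, hσ]
      · intro hτ
        rw [hO, Set.mem_setOf_eq] at hτ
        refine ⟨φ τ, ?_, hφinv τ⟩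
        rw [hE, Set.mem_setOf_eq, hφeps, hτ, neg_neg]
    have hEO : E.ncard = O.ncard := by
      rw [← himg, Set.ncard_image_of_injective _ hφinv.injective]
    have huniv : E ∪ O = Set.univ := by
      ext σ
      simp only [Set.mem_union, hE, hO, Set.mem_setOf_eq, Set.mem_univ, iff_true]
      exact Int.units_eq_one_or (eps11 σ)
    have hdisj : Disjoint E O := by
      rw [Set.disjoint_left]
      intro σ hσ hσ'
      rw [hE, Set.mem_setOf_eq] at hσ
      rw [hO, Set.mem_setOf_eq] at hσ'
      rw [hσ] at hσ'
      exact absurd hσ' (by decide)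
    have hsum : E.ncard + O.ncard = (Nat.factorial q) ^ r := by
      rw [← Set.ncard_union_eq hdisj (Set.toFinite _) (Set.toFinite _), huniv,
        Set.ncard_univ, Nat.card_eq_fintype_card]
      simp [Fintype.card_fun, Fintype.card_perm]
    omega
end
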